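/- A numerical semigroup S is of maximal embedding dimension (i.e., e(S) = m(S)) if and only if the multiplicity m(S) is an Arf element of S. -/

import Mathlib

/-- A numerical semigroup: an additive submonoid of ℕ with finite complement. -/
structure NumSgp where
  carrier : Set ℕ
  zero_mem : 0 ∈ carrier
  add_mem : ∀ ⦃a b : ℕ⦄, a ∈ carrier → b ∈ carrier → a + b ∈ carrier
  cofinite : carrierᶜ.Finite

/-- The multiplicity: the smallest nonzero element. -/
noncomputable def NumSgp.mult (S : NumSgp) : ℕ := sInf {n | n ∈ S.carrier ∧ n ≠ 0}

/-- The Apéry set of `S` with respect to `s`: elements `x ∈ S` with `x - s ∉ S`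
(over the integers, i.e. there is no `y ∈ S` with `y + s = x`). -/
def NumSgp.Ap (S : NumSgp) (s : ℕ) : Set ℕ :=
  {x | x ∈ S.carrier ∧ ∀ y ∈ S.carrier, y + s ≠ x}

/-- `z` is an Arf element of `S`. -/
def NumSgp.ArfElem (S : NumSgp) (z : ℕ) : Prop :=
  ∀ x ∈ S.carrier, ∀ y ∈ S.carrier, z ≤ x → z ≤ y → x + y - z ∈ S.carrier

/-- The minimal generating set: nonzero elements not expressible as a sum of two
nonzero elements of `S`. -/
def NumSgp.minGen (S : NumSgp) : Set ℕ :=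
  {x | x ∈ S.carrier ∧ x ≠ 0 ∧ ∀ a ∈ S.carrier, ∀ b ∈ S.carrier, a ≠ 0 → b ≠ 0 → a + b ≠ x}

/-- The embedding dimension: the cardinality of the minimal generating set. -/
noncomputable def NumSgp.edim (S : NumSgp) : ℕ := S.minGen.ncard

/-- The Frobenius number: the largest gap. -/
noncomputable def NumSgp.frob (S : NumSgp) : ℕ := sSup S.carrierᶜ

/-- The conductor: the smallest `c` with `c + ℤ≥0 ⊆ S`. -/
noncomputable def NumSgp.cond (S : NumSgp) : ℕ := sInf {c | ∀ n, c ≤ n → n ∈ S.carrier}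

/-- The genus: the number of gaps. -/
noncomputable def NumSgp.genus (S : NumSgp) : ℕ := S.carrierᶜ.ncard

/-- The set of pseudo-Frobenius numbers. -/
def NumSgp.PF (S : NumSgp) : Set ℕ :=
  {x | x ∉ S.carrier ∧ ∀ s ∈ S.carrier, s ≠ 0 → x + s ∈ S.carrier}

/-- The type of `S`: the number of pseudo-Frobenius numbers. -/
noncomputable def NumSgp.type (S : NumSgp) : ℕ := S.PF.ncard

/-- `S` is a MED semigroup: its multiplicity is an Arf element, i.e. for all
`x, y ∈ S` with `x, y ≥ m(S)`, `x + y - m(S) ∈ S`. -/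
def NumSgp.IsMED (S : NumSgp) : Prop := S.ArfElem S.mult

/-- The MED closure of `S`: the intersection of all MED numerical semigroups
containing `S` with the same multiplicity. -/
def NumSgp.MEDclosure (S : NumSgp) : Set ℕ :=
  ⋂ T ∈ {T : NumSgp | S.carrier ⊆ T.carrier ∧ T.mult = S.mult ∧ T.IsMED}, T.carrier

namespace NumSgpAux

variable (S : NumSgp)

lemma mult_spec : S.mult ∈ S.carrier ∧ S.mult ≠ 0 := by
  have hinf : S.carrier.Infinite := by
    have := S.cofinite.infinite_compl
    rwa [compl_compl] at this
  obtain ⟨n, hn, hn0⟩ := hinf.exists_gt 0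
  have : sInf {n | n ∈ S.carrier ∧ n ≠ 0} ∈ {n | n ∈ S.carrier ∧ n ≠ 0} :=
    Nat.sInf_mem ⟨n, ⟨hn, by omega⟩⟩
  exact this

lemma mult_le {x : ℕ} (hx : x ∈ S.carrier) (h0 : x ≠ 0) : S.mult ≤ x :=
  Nat.sInf_le ⟨hx, h0⟩

lemma exists_bound : ∃ N, ∀ n, N ≤ n → n ∈ S.carrier := by
  obtain ⟨B, hB⟩ := S.cofinite.bddAbove
  refine ⟨B + 1, fun n hn => ?_⟩
  by_contra h
  exact absurd (hB h) (by omega)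

lemma add_mul_mem {z : ℕ} (hz : z ∈ S.carrier) (k : ℕ) :
    z + k * S.mult ∈ S.carrier := by
  induction k with
  | zero => simpa using hz
  | succ n ih =>
      have := S.add_mem ih (mult_spec S).1
      have h : z + n * S.mult + S.mult = z + (n + 1) * S.mult := by ring
      rwa [h] at this

lemma resid_nonempty {i : ℕ} (hi : i < S.mult) :
    {x | x ∈ S.carrier ∧ x % S.mult = i}.Nonempty := by
  obtain ⟨N, hN⟩ := exists_bound S
  refine ⟨i + (N + 1) * S.mult, hN _ ?_, ?_⟩
  · have : N + 1 ≤ (N + 1) * S.mult :=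
      Nat.le_mul_of_pos_right _ (Nat.pos_of_ne_zero (mult_spec S).2)
    omega
  · rw [Nat.add_mul_mod_self_right, Nat.mod_eq_of_lt hi]

lemma Ap_eq : S.Ap S.mult =
    (fun i => sInf {x | x ∈ S.carrier ∧ x % S.mult = i}) '' (Set.Iio S.mult) := by
  obtain ⟨hmS, hm0⟩ := mult_spec S
  set m := S.mult with hm
  have hmpos : 0 < m := Nat.pos_of_ne_zero hm0
  ext x
  constructor
  · rintro ⟨hxS, hx⟩
    refine ⟨x % m, Nat.mod_lt _ hmpos, ?_⟩
    show sInf {y | y ∈ S.carrier ∧ y % m = x % m} = x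
    have hxA : x ∈ {y | y ∈ S.carrier ∧ y % m = x % m} := ⟨hxS, rfl⟩
    have hlb : ∀ z ∈ {y | y ∈ S.carrier ∧ y % m = x % m}, x ≤ z := by
      rintro z ⟨hzS, hzmod⟩
      by_contra hlt
      push_neg at hlt
      have hdvd : m ∣ x - z := (Nat.modEq_iff_dvd' (le_of_lt hlt)).mp hzmod
      obtain ⟨j, hj⟩ := hdvd
      have hj1 : 1 ≤ j := by
        rcases j with _ | j
        · simp at hj; omega
        · omega
      obtain ⟨t, rfl⟩ := Nat.exists_eq_add_of_le hj1
      have hy : z + t * m ∈ S.carrier := add_mul_mem S hzS t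
      have heq : (z + t * m) + m = x := by
        have h2 : m * (1 + t) = t * m + m := by ring
        omega
      exact hx _ hy heq
    have hmem := Nat.sInf_mem ⟨x, hxA⟩
    exact le_antisymm (Nat.sInf_le hxA) (hlb _ hmem)
  · rintro ⟨i, hi, hfx⟩
    rw [← hfx]
    show sInf {x | x ∈ S.carrier ∧ x % m = i} ∈ S.Ap m
    obtain ⟨hfS, hfmod⟩ := Nat.sInf_mem (resid_nonempty S hi)
    have hfmod' : sInf {x | x ∈ S.carrier ∧ x % m = i} % m = i := hfmod
    refine ⟨hfS, fun y hy hyx => ?_⟩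
    have h2 : (y + m) % m = y % m := Nat.add_mod_right y m
    rw [hyx] at h2
    have hymod : y % m = i := by omega
    have := Nat.sInf_le (show y ∈ {x | x ∈ S.carrier ∧ x % m = i} from ⟨hy, hymod⟩)
    omega

lemma Ap_ncard : (S.Ap S.mult).ncard = S.mult := by
  rw [Ap_eq]
  rw [Set.ncard_image_of_injOn, ← Finset.coe_range]
  · rw [Set.ncard_coe_finset, Finset.card_range]
  · intro a ha b hb hab
    have ha' := Nat.sInf_mem (resid_nonempty S ha)
    have hb' := Nat.sInf_mem (resid_nonempty S hb)
    rw [← ha'.2, ← hb'.2]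
    exact congrArg (· % S.mult) hab

lemma Ap_finite : (S.Ap S.mult).Finite := by
  rw [Ap_eq]
  exact (Set.finite_Iio _).image _

lemma zero_mem_Ap : 0 ∈ S.Ap S.mult := by
  obtain ⟨hmS, hm0⟩ := mult_spec S
  exact ⟨S.zero_mem, fun y hy h => by omega⟩

lemma mult_not_mem_Ap : S.mult ∉ S.Ap S.mult := by
  rintro ⟨_, h⟩
  exact h 0 S.zero_mem (by omega)

lemma T_ncard : ((S.Ap S.mult \ {0}) ∪ {S.mult}).ncard = S.mult := by
  obtain ⟨hmS, hm0⟩ := mult_spec S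
  have hfin : (S.Ap S.mult \ {0}).Finite := (Ap_finite S).diff
  have hnot : S.mult ∉ S.Ap S.mult \ {0} := fun h => mult_not_mem_Ap S h.1
  have h1 : (S.Ap S.mult \ {0}) ∪ {S.mult} = insert S.mult (S.Ap S.mult \ {0}) := by
    rw [Set.union_singleton]
  rw [h1, Set.ncard_insert_of_notMem hnot hfin,
    Set.ncard_diff_singleton_of_mem (zero_mem_Ap S), Ap_ncard]
  have : 1 ≤ S.mult := Nat.pos_of_ne_zero hm0
  omega

lemma T_finite : ((S.Ap S.mult \ {0}) ∪ {S.mult}).Finite :=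
  ((Ap_finite S).diff).union (Set.finite_singleton _)

lemma mult_mem_minGen : S.mult ∈ S.minGen := by
  obtain ⟨hmS, hm0⟩ := mult_spec S
  refine ⟨hmS, hm0, fun a ha b hb ha0 hb0 hab => ?_⟩
  have h1 := mult_le S ha ha0
  have h2 := mult_le S hb hb0
  omega

lemma minGen_subset : S.minGen ⊆ (S.Ap S.mult \ {0}) ∪ {S.mult} := by
  obtain ⟨hmS, hm0⟩ := mult_spec S
  rintro g ⟨hgS, hg0, hg⟩
  by_cases hgm : g = S.mult
  · exact Or.inr hgm
  · left
    refine ⟨⟨hgS, fun y hy hyg => ?_⟩, hg0⟩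
    by_cases hy0 : y = 0
    · exact hgm (by omega)
    · exact hg y hy S.mult hmS hy0 hm0 hyg

end NumSgpAux

theorem med_iff_mult_arf (S : NumSgp) :
    S.edim = S.mult ↔ S.ArfElem S.mult := by
  obtain ⟨hmS, hm0⟩ := NumSgpAux.mult_spec S
  constructor
  · intro hed
    have heq : S.minGen = (S.Ap S.mult \ {0}) ∪ {S.mult} :=
      Set.eq_of_subset_of_ncard_le (NumSgpAux.minGen_subset S)
        (by rw [NumSgpAux.T_ncard S]; exact le_of_eq hed.symm) (NumSgpAux.T_finite S)
    intro x hx y hy hmx hmy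
    by_cases h : ∃ z ∈ S.carrier, z + S.mult = x + y
    · obtain ⟨z, hz, hzeq⟩ := h
      have : x + y - S.mult = z := by omega
      rwa [this]
    · push_neg at h
      have hxyAp : x + y ∈ S.Ap S.mult := ⟨S.add_mem hx hy, h⟩
      have hxy0 : x + y ≠ 0 := by omega
      have : x + y ∈ S.minGen := by
        rw [heq]; exact Or.inl ⟨hxyAp, hxy0⟩
      exact absurd rfl (this.2.2 x hx y hy (by omega) (by omega))
  · intro harf
    have heq : S.minGen = (S.Ap S.mult \ {0}) ∪ {S.mult} := by
      refine le_antisymm (NumSgpAux.minGen_subset S) ?_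
      rintro g (⟨⟨hgS, hgAp⟩, hg0⟩ | hgm)
      · refine ⟨hgS, hg0, fun a ha b hb ha0 hb0 hab => ?_⟩
        have h1 := NumSgpAux.mult_le S ha ha0
        have h2 := NumSgpAux.mult_le S hb hb0
        have hz := harf a ha b hb h1 h2
        exact hgAp _ hz (by omega)
      · rw [hgm]; exact NumSgpAux.mult_mem_minGen S
    rw [NumSgp.edim, heq, NumSgpAux.T_ncard S]
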